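/- The interval I_f of Case 2 is nonempty if and only if δ ≤ T_{s-1}, where T_{s-1} is the y-intercept of the line through the last two vertices of the Newton polygon of q. -/
import Mathlib


/-- In Case 2, the interval I_f = {l > 0 : lδ ≤ γ + ld ≤ i + lj for all
(i,j) with b_{ij} ≠ 0} is nonempty if and only if δ ≤ T_{s-1} = l₁⁻¹γ + d, the
y-intercept of the line through the last two vertices (n_{s-1},m_{s-1}), (γ,d) = (n_s,m_s)
of the Newton polygon of q. -/
theorem stmt9
    (S : Set (ℕ × ℕ)) (γ d δ n' m' : ℕ) (hδ : 2 ≤ δ) (hd : 1 ≤ d)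
    (hn : n' < γ) (hm : d < m') (hmem : (n', m') ∈ S)
    (hj : ∀ p ∈ S, d ≤ p.2)
    (hjd : ∀ p ∈ S, p.2 = d → γ ≤ p.1)
    (l1 : ℝ) (hl1 : l1 = ((γ : ℝ) - n') / ((m' : ℝ) - d))
    (hmax : IsGreatest {x : ℝ | ∃ p ∈ S, d < p.2 ∧ x = ((γ : ℝ) - p.1) / ((p.2 : ℝ) - d)} l1)
    (I : Set ℝ)
    (hI : I = {l : ℝ | 0 < l ∧ l * δ ≤ (γ : ℝ) + l * d ∧
      ∀ p ∈ S, (γ : ℝ) + l * d ≤ (p.1 : ℝ) + l * p.2}) :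
    I.Nonempty ↔ (δ : ℝ) ≤ l1⁻¹ * γ + d := by
  have hγn : (n' : ℝ) < γ := by exact_mod_cast hn
  have hdm : (d : ℝ) < m' := by exact_mod_cast hm
  have hl1pos : 0 < l1 := hl1 ▸ div_pos (by linarith) (by linarith)
  have hinv : l1 * (l1⁻¹ * γ) = γ := by field_simp
  constructor
  · rintro ⟨l, hl⟩
    rw [hI] at hl
    obtain ⟨hlpos, hlδ, hlall⟩ := hl
    have h1 : l1 ≤ l := by
      have h2 := hlall (n', m') hmem
      simp only at h2
      rw [hl1, div_le_iff₀ (by linarith : (0:ℝ) < (m' : ℝ) - d)]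
      nlinarith
    rw [← sub_le_iff_le_add, inv_mul_eq_div, le_div_iff₀ hl1pos]
    rcases le_or_gt (d : ℝ) δ with hc | hc
    · nlinarith [mul_le_mul_of_nonneg_left h1 (sub_nonneg.mpr hc)]
    · nlinarith [mul_pos hl1pos (sub_pos.mpr hc), Nat.cast_nonneg (α := ℝ) γ]
  · intro h
    refine ⟨l1, ?_⟩
    rw [hI]
    refine ⟨hl1pos, ?_, ?_⟩
    · nlinarith [mul_le_mul_of_nonneg_left h hl1pos.le]
    · intro p hp
      rcases (hj p hp).lt_or_eq with hlt | heq
      · have hub := hmax.2 ⟨p, hp, hlt, rfl⟩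
        have hpd : (d : ℝ) < p.2 := by exact_mod_cast hlt
        rw [div_le_iff₀ (by linarith : (0:ℝ) < (p.2 : ℝ) - d)] at hub
        nlinarith
      · have h2 : (p.2 : ℝ) = d := by exact_mod_cast heq.symm
        have h3 : (γ : ℝ) ≤ p.1 := by exact_mod_cast hjd p hp heq.symm
        rw [h2]; linarith
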